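/- Let M be a positively ordered monoid. Then M is nearly unperforated if and only if for all a, b ∈ M, the inequalities 2·a ≤ 2·b and 3·a ≤ 3·b together imply a ≤ b. -/

import Mathlib

/-- A positively ordered monoid is nearly unperforated if `a ≤ b` whenever
`k•a ≤ k•b` for all sufficiently large `k`. -/
def NearlyUnperforated (M : Type*) [AddCommMonoid M] [PartialOrder M] [IsOrderedAddMonoid M] : Prop :=
  ∀ a b : M, (∃ k₀ : ℕ, ∀ k : ℕ, k₀ ≤ k → k • a ≤ k • b) → a ≤ b

/-- A positively ordered monoid `M` is nearly unperforated
if and only if for all `a b ∈ M`, the inequalities `2•a ≤ 2•b` and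
`3•a ≤ 3•b` together imply `a ≤ b`. -/
theorem stmt2 {M : Type*} [AddCommMonoid M] [PartialOrder M] [IsOrderedAddMonoid M] (h0 : ∀ x : M, 0 ≤ x) :
    NearlyUnperforated M ↔
      ∀ a b : M, 2 • a ≤ 2 • b → 3 • a ≤ 3 • b → a ≤ b := by
  constructor
  · intro hnu a b h2 h3
    apply hnu a b
    refine ⟨2, fun k hk => ?_⟩
    obtain ⟨m, n, rfl⟩ : ∃ m n : ℕ, k = m * 2 + n * 3 := by
      rcases Nat.even_or_odd k with ⟨m, hm⟩ | ⟨m, hm⟩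
      · exact ⟨m, 0, by omega⟩
      · exact ⟨m - 1, 1, by omega⟩
    calc (m * 2 + n * 3) • a = m • (2 • a) + n • (3 • a) := by
            rw [add_nsmul, smul_smul, smul_smul]
      _ ≤ m • (2 • b) + n • (3 • b) :=
            add_le_add (nsmul_le_nsmul_right h2 m) (nsmul_le_nsmul_right h3 n)
      _ = (m * 2 + n * 3) • b := by rw [add_nsmul, smul_smul, smul_smul]
  · rintro hP a b ⟨k₀, hk⟩
    suffices H : ∀ k : ℕ, (∀ j : ℕ, k + 1 ≤ j → j • a ≤ j • b) → a ≤ b by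
      exact H k₀ fun j hj => hk j (by omega)
    intro k
    induction k with
    | zero => intro h; simpa using h 1 le_rfl
    | succ k ih =>
      intro h
      apply ih
      intro j hj
      rcases eq_or_lt_of_le hj with rfl | hlt
      · apply hP
        · rw [smul_smul, smul_smul]; exact h _ (by omega)
        · rw [smul_smul, smul_smul]; exact h _ (by omega)
      · exact h j (by omega)
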